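/- Let θ₁, θ₂ ∈ ℝⁿ be nonzero vectors and write θ̂ᵢ = θᵢ/‖θᵢ‖. Then 1 − ⟨θ̂₁, θ̂₂⟩² ≤ ‖θ₁ − θ₂‖² · (‖θ₁‖ + ‖θ₂‖)² / ( 4 ‖θ₁‖² ‖θ₂‖² ). -/

import Mathlib

open RealInnerProductSpace

/-- For nonzero `θ₁, θ₂`, the squared sine of the angle between them satisfies
`1 − ⟪θ̂₁, θ̂₂⟫² ≤ ‖θ₁ − θ₂‖²(‖θ₁‖ + ‖θ₂‖)²/(4‖θ₁‖²‖θ₂‖²)`. -/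
theorem sin_sq_angle_upper_bound {n : ℕ}
    (θ₁ θ₂ : EuclideanSpace ℝ (Fin n)) (h₁ : θ₁ ≠ 0) (h₂ : θ₂ ≠ 0) :
    1 - ⟪‖θ₁‖⁻¹ • θ₁, ‖θ₂‖⁻¹ • θ₂⟫ ^ 2 ≤
      ‖θ₁ - θ₂‖ ^ 2 * (‖θ₁‖ + ‖θ₂‖) ^ 2 / (4 * ‖θ₁‖ ^ 2 * ‖θ₂‖ ^ 2) := by
  have ha : (0:ℝ) < ‖θ₁‖ := norm_pos_iff.mpr h₁
  have hb : (0:ℝ) < ‖θ₂‖ := norm_pos_iff.mpr h₂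
  have hcs : ⟪θ₁, θ₂⟫ ≤ ‖θ₁‖ * ‖θ₂‖ := real_inner_le_norm θ₁ θ₂
  have hns : ‖θ₁ - θ₂‖ ^ 2 = ‖θ₁‖ ^ 2 - 2 * ⟪θ₁, θ₂⟫ + ‖θ₂‖ ^ 2 := by
    rw [@norm_sub_sq_real]
  rw [real_inner_smul_left, real_inner_smul_right, hns,
    le_div_iff₀ (by positivity)]
  have hinv1 : ‖θ₁‖⁻¹ * ‖θ₁‖ = 1 := inv_mul_cancel₀ ha.ne'
  have hinv2 : ‖θ₂‖⁻¹ * ‖θ₂‖ = 1 := inv_mul_cancel₀ hb.ne'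
  have hkey : (‖θ₁‖⁻¹ * (‖θ₂‖⁻¹ * ⟪θ₁, θ₂⟫)) ^ 2 * (‖θ₁‖ ^ 2 * ‖θ₂‖ ^ 2)
      = ⟪θ₁, θ₂⟫ ^ 2 := by
    field_simp
  nlinarith [hkey, sq_nonneg (‖θ₁‖ - ‖θ₂‖), sq_nonneg (‖θ₁‖ + ‖θ₂‖),
    mul_pos ha hb, sq_nonneg (⟪θ₁, θ₂⟫ - ‖θ₁‖ * ‖θ₂‖),
    mul_nonneg (mul_nonneg (sub_nonneg.mpr hcs) (sq_nonneg (‖θ₁‖ - ‖θ₂‖)))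
      (sq_nonneg (‖θ₁‖ + ‖θ₂‖)),
    mul_nonneg (sub_nonneg.mpr hcs) (sq_nonneg (‖θ₁‖ - ‖θ₂‖))]
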